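/- arXiv:1307.6149 — 2 statements merged into one kernel-verified Lean document; each statement's English description precedes it below -/
import Mathlib

section
/- For F ∈ 𝓕 and n ≥ 2, the condition lim_{K→∞} liminf_{x→∞} P(X_{2,n} ≤ K | Sₙ > x) = 1 is equivalent to lim_{K→∞} liminf_{x→∞} P(X_{1,n} > x − K | Sₙ > x) = 1, where X_{1,n} is the maximum and X_{2,n} the second largest of i.i.d. X₁,...,Xₙ with distribution F. -/
open MeasureTheory Filter Set
open scoped ENNReal

/-- `P` under the law of `n` i.i.d. copies with common law `μ`. -/
noncomputable def piP (μ : Measure ℝ) (n : ℕ) (A : Set (Fin n → ℝ)) : ℝ :=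
  ((Measure.pi fun _ : Fin n => μ) A).toReal

/-- The event `Sₙ > x`. -/
def SumGt {n : ℕ} (x : ℝ) (v : Fin n → ℝ) : Prop := x < ∑ i, v i

/-- The event that the second largest of `v 0, …, v (n-1)` is `≤ K`. -/
def SecondLe {n : ℕ} (K : ℝ) (v : Fin n → ℝ) : Prop :=
  ∀ i j : Fin n, i ≠ j → v i ≤ K ∨ v j ≤ K

/-- Conditional probability `P(A | Sₙ > x)`. -/
noncomputable def condN (μ : Measure ℝ) (n : ℕ) (A : Set (Fin n → ℝ)) (x : ℝ) : ℝ :=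
  piP μ n (A ∩ {v | SumGt x v}) / piP μ n {v | SumGt x v}

section Aux

variable {μ : Measure ℝ} [IsProbabilityMeasure μ] {n : ℕ}

lemma aux_condN_nonneg (A : Set (Fin n → ℝ)) (x : ℝ) : 0 ≤ condN μ n A x :=
  div_nonneg ENNReal.toReal_nonneg ENNReal.toReal_nonneg

lemma aux_piP_mono {A B : Set (Fin n → ℝ)} (h : A ⊆ B) : piP μ n A ≤ piP μ n B :=
  ENNReal.toReal_mono (measure_ne_top _ _) (measure_mono h)

lemma aux_condN_le_one (A : Set (Fin n → ℝ)) (x : ℝ) : condN μ n A x ≤ 1 :=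
  div_le_one_of_le₀ (aux_piP_mono inter_subset_right) ENNReal.toReal_nonneg

lemma aux_condN_mono {A B : Set (Fin n → ℝ)} (x : ℝ)
    (h : A ∩ {v | SumGt x v} ⊆ B ∩ {v | SumGt x v}) :
    condN μ n A x ≤ condN μ n B x :=
  div_le_div_of_nonneg_right (aux_piP_mono h) ENNReal.toReal_nonneg

/-- The forward inclusion: a small second maximum plus a big sum forces a big maximum. -/
lemma aux_fwd_subset (hn : 2 ≤ n) (K x : ℝ) :
    {v : Fin n → ℝ | SecondLe K v} ∩ {v | SumGt x v} ⊆
      {v | ∃ i, x - ((n : ℝ) - 1) * K < v i} := by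
  rintro v ⟨hSL, hS⟩
  have hS' : x < ∑ i, v i := hS
  have hne : (Finset.univ : Finset (Fin n)).Nonempty :=
    ⟨⟨0, by omega⟩, Finset.mem_univ _⟩
  obtain ⟨m, -, hm⟩ := Finset.exists_max_image Finset.univ v hne
  have hN : (2 : ℝ) ≤ (n : ℝ) := by exact_mod_cast hn
  refine ⟨m, ?_⟩
  by_cases hK : K < v m
  · have hsum : ∑ i ∈ Finset.univ.erase m, v i ≤ ((n : ℝ) - 1) * K := by
      have hle : ∀ i ∈ Finset.univ.erase m, v i ≤ K := by
        intro i hi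
        rcases hSL i m (Finset.ne_of_mem_erase hi) with h | h
        · exact h
        · exact absurd h (not_le.2 hK)
      calc ∑ i ∈ Finset.univ.erase m, v i ≤ (Finset.univ.erase m).card • K :=
            Finset.sum_le_card_nsmul _ _ _ hle
        _ = ((Finset.univ.erase m).card : ℝ) * K := nsmul_eq_mul _ _
        _ = ((n : ℝ) - 1) * K := by
            rw [Finset.card_erase_of_mem (Finset.mem_univ m), Finset.card_univ,
              Fintype.card_fin]
            have h1 : 1 ≤ n := by omega
            push_cast [Nat.cast_sub h1]
            ring
    have hsplit : ∑ i, v i = v m + ∑ i ∈ Finset.univ.erase m, v i :=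
      (Finset.add_sum_erase _ v (Finset.mem_univ m)).symm
    linarith
  · push_neg at hK
    have h1 : (∑ i, v i) ≤ (n : ℝ) * v m := by
      calc ∑ i, v i ≤ Finset.univ.card • v m :=
            Finset.sum_le_card_nsmul _ _ _ (fun i _ => hm i (Finset.mem_univ i))
        _ = (n : ℝ) * v m := by rw [Finset.card_univ, Fintype.card_fin, nsmul_eq_mul]
    have h2 : (∑ i, v i) ≤ (n : ℝ) * K := by
      calc ∑ i, v i ≤ (n : ℝ) * v m := h1
        _ ≤ (n : ℝ) * K := by nlinarith
    have hx1 : x < (n : ℝ) * v m := lt_of_lt_of_le hS' h1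
    have hx2 : x < (n : ℝ) * K := lt_of_lt_of_le hS' h2
    nlinarith [mul_lt_mul_of_pos_right hx2 (show (0:ℝ) < (n:ℝ) - 1 by linarith)]

/-- Measure of a two-coordinate cylinder. -/
lemma aux_pair_measure {i j : Fin n} (hij : i ≠ j) (a b : ℝ) :
    (Measure.pi fun _ : Fin n => μ) {v | a < v i ∧ b < v j} = μ (Ioi a) * μ (Ioi b) := by
  have hset : {v : Fin n → ℝ | a < v i ∧ b < v j} =
      Set.pi univ (fun k => if k = i then Ioi a else if k = j then Ioi b else univ) := by
    ext v
    simp only [Set.mem_pi, Set.mem_univ, forall_true_left, Set.mem_setOf_eq]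
    constructor
    · rintro ⟨h1, h2⟩ k
      split_ifs with h h'
      · subst h; exact h1
      · subst h'; exact h2
      · trivial
    · intro h
      have h1 := h i
      have h2 := h j
      rw [if_pos rfl] at h1
      rw [if_neg (Ne.symm hij), if_pos rfl] at h2
      exact ⟨h1, h2⟩
  rw [hset, Measure.pi_pi]
  rw [← Finset.prod_sdiff (Finset.subset_univ ({i, j} : Finset (Fin n)))]
  have h1 : ∀ k ∈ Finset.univ \ ({i, j} : Finset (Fin n)),
      μ (if k = i then Ioi a else if k = j then Ioi b else univ) = 1 := by
    intro k hk
    simp only [Finset.mem_sdiff, Finset.mem_insert, Finset.mem_singleton, not_or] at hk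
    rw [if_neg hk.2.1, if_neg hk.2.2]
    exact measure_univ
  rw [Finset.prod_congr rfl h1, Finset.prod_const_one, one_mul, Finset.prod_pair hij,
    if_pos rfl, if_neg (Ne.symm hij), if_pos rfl]

/-- Bound for the bad event: two big coordinates and a very big coordinate. -/
lemma aux_bad_bound (K K' x : ℝ) :
    (Measure.pi fun _ : Fin n => μ) ({v | ¬ SecondLe K v} ∩ {v | ∃ i, x - K' < v i}) ≤
      ((n * n : ℕ) : ℝ≥0∞) * (μ (Ioi K) * μ (Ioi (x - K'))) := by
  have hsub : {v : Fin n → ℝ | ¬ SecondLe K v} ∩ {v | ∃ i, x - K' < v i} ⊆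
      ⋃ p : Fin n × Fin n, ⋃ (_ : p.1 ≠ p.2), {v | K < v p.1 ∧ x - K' < v p.2} := by
    rintro v ⟨hbad, m, hmax⟩
    simp only [SecondLe, not_forall, not_or, not_le] at hbad
    obtain ⟨a, b, hab, ha, hb⟩ := hbad
    by_cases hma : m = a
    · exact Set.mem_iUnion.2 ⟨(b, m), Set.mem_iUnion.2
        ⟨by simpa [hma] using hab.symm, hb, hmax⟩⟩
    · exact Set.mem_iUnion.2 ⟨(a, m), Set.mem_iUnion.2
        ⟨fun h => hma h.symm, ha, hmax⟩⟩
  calc (Measure.pi fun _ : Fin n => μ)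
        ({v | ¬ SecondLe K v} ∩ {v | ∃ i, x - K' < v i})
      ≤ ∑' p : Fin n × Fin n, (Measure.pi fun _ : Fin n => μ)
          (⋃ (_ : p.1 ≠ p.2), {v | K < v p.1 ∧ x - K' < v p.2}) :=
        (measure_mono hsub).trans (measure_iUnion_le _)
    _ ≤ ∑' _ : Fin n × Fin n, μ (Ioi K) * μ (Ioi (x - K')) := by
        refine ENNReal.tsum_le_tsum fun p => ?_
        by_cases hp : p.1 ≠ p.2
        · rw [Set.iUnion_eq_if, if_pos hp]
          exact le_of_eq (aux_pair_measure hp K (x - K'))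
        · rw [Set.iUnion_eq_if, if_neg hp]
          simp
    _ = ((n * n : ℕ) : ℝ≥0∞) * (μ (Ioi K) * μ (Ioi (x - K'))) := by
        rw [tsum_fintype, Finset.sum_const, Finset.card_univ]
        simp [Fintype.card_prod, nsmul_eq_mul]

/-- Lower bound for the probability of a big sum. -/
lemma aux_den_lb (hn : 2 ≤ n) {K' : ℝ} (hK' : 0 ≤ K') (x : ℝ) :
    μ (Ioi (x - K')) * μ (Ioi K') ^ (n - 1) ≤
      (Measure.pi fun _ : Fin n => μ) {v | SumGt x v} := by
  have hnpos : 0 < n := by omega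
  set i₀ : Fin n := ⟨0, hnpos⟩ with hi₀
  set g : Fin n → Set ℝ := fun k => if k = i₀ then Ioi (x - K') else Ioi K' with hg
  have hsub : Set.pi univ g ⊆ {v : Fin n → ℝ | SumGt x v} := by
    intro v hv
    have h0 : x - K' < v i₀ := by
      have := hv i₀ (Set.mem_univ _)
      simpa [hg] using this
    have hk : ∀ k ∈ Finset.univ.erase i₀, K' ≤ v k := by
      intro k hk
      have hki := Finset.ne_of_mem_erase hk
      have := hv k (Set.mem_univ _)
      rw [hg] at this
      simp only [if_neg hki] at this
      exact le_of_lt this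
    have hsumrest : ((Finset.univ.erase i₀).card : ℝ) * K' ≤
        ∑ k ∈ Finset.univ.erase i₀, v k := by
      have := Finset.card_nsmul_le_sum (Finset.univ.erase i₀) v K' hk
      rwa [nsmul_eq_mul] at this
    have hcard : (Finset.univ.erase i₀).card = n - 1 := by
      rw [Finset.card_erase_of_mem (Finset.mem_univ i₀), Finset.card_univ, Fintype.card_fin]
    have hge : K' ≤ ((Finset.univ.erase i₀).card : ℝ) * K' := by
      rw [hcard]
      have h1 : 1 ≤ ((n - 1 : ℕ) : ℝ) := by
        have : 1 ≤ n - 1 := by omega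
        exact_mod_cast this
      nlinarith
    show x < ∑ i, v i
    rw [← Finset.add_sum_erase _ v (Finset.mem_univ i₀)]
    linarith
  calc μ (Ioi (x - K')) * μ (Ioi K') ^ (n - 1)
      = (Measure.pi fun _ : Fin n => μ) (Set.pi univ g) := by
        rw [Measure.pi_pi]
        rw [← Finset.mul_prod_erase Finset.univ _ (Finset.mem_univ i₀)]
        have h1 : ∀ k ∈ Finset.univ.erase i₀, μ (g k) = μ (Ioi K') := by
          intro k hk
          rw [hg]
          simp only [if_neg (Finset.ne_of_mem_erase hk)]
        rw [Finset.prod_congr rfl h1, Finset.prod_const,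
          Finset.card_erase_of_mem (Finset.mem_univ i₀), Finset.card_univ, Fintype.card_fin]
        rw [hg]
        simp
    _ ≤ _ := measure_mono hsub

/-- The denominator is positive. -/
lemma aux_den_pos (hub : ∀ x : ℝ, 0 < μ (Set.Ioi x)) (hn : 2 ≤ n) (x : ℝ) :
    0 < piP μ n {v | SumGt x v} := by
  have h := aux_den_lb (μ := μ) hn le_rfl x
  simp only [sub_zero] at h
  have hpos : 0 < μ (Ioi x) * μ (Ioi (0:ℝ)) ^ (n - 1) :=
    ENNReal.mul_pos (hub x).ne' (pow_ne_zero _ (hub 0).ne')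
  exact ENNReal.toReal_pos (lt_of_lt_of_le hpos h).ne' (measure_ne_top _ _)

/-- Key backward inequality. -/
lemma aux_key_bwd (hub : ∀ x : ℝ, 0 < μ (Set.Ioi x)) (hn : 2 ≤ n) (K : ℝ) {K' : ℝ}
    (hK' : 0 ≤ K') (x : ℝ) :
    condN μ n {v | ∃ i, x - K' < v i} x ≤
      condN μ n {v | SecondLe K v} x +
        ((n * n : ℕ) : ℝ) * (μ (Ioi K)).toReal / (μ (Ioi K')).toReal ^ (n - 1) := by
  set ν := Measure.pi fun _ : Fin n => μ with hν
  set Sx := {v : Fin n → ℝ | SumGt x v} with hSx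
  have hMsub : {v : Fin n → ℝ | ∃ i, x - K' < v i} ∩ Sx ⊆
      ({v | SecondLe K v} ∩ Sx) ∪ ({v | ¬ SecondLe K v} ∩ {v | ∃ i, x - K' < v i}) := by
    rintro v ⟨hM, hSv⟩
    by_cases h : SecondLe K v
    · exact Or.inl ⟨h, hSv⟩
    · exact Or.inr ⟨h, hM⟩
  have hENN : ν ({v | ∃ i, x - K' < v i} ∩ Sx) ≤
      ν ({v | SecondLe K v} ∩ Sx) + ((n * n : ℕ) : ℝ≥0∞) * (μ (Ioi K) * μ (Ioi (x - K'))) :=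
    (measure_mono hMsub).trans ((measure_union_le _ _).trans
      (add_le_add le_rfl (aux_bad_bound K K' x)))
  have hfin1 : ν ({v | SecondLe K v} ∩ Sx) ≠ ⊤ := measure_ne_top _ _
  have hfinE : ((n * n : ℕ) : ℝ≥0∞) * (μ (Ioi K) * μ (Ioi (x - K'))) ≠ ⊤ :=
    ENNReal.mul_ne_top (ENNReal.natCast_ne_top _) (ENNReal.mul_ne_top (measure_ne_top _ _) (measure_ne_top _ _))
  have hreal : piP μ n ({v | ∃ i, x - K' < v i} ∩ Sx) ≤
      piP μ n ({v | SecondLe K v} ∩ Sx) +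
        ((n * n : ℕ) : ℝ) * ((μ (Ioi K)).toReal * (μ (Ioi (x - K'))).toReal) := by
    have h1 := ENNReal.toReal_mono (ENNReal.add_ne_top.2 ⟨hfin1, hfinE⟩) hENN
    rw [ENNReal.toReal_add hfin1 hfinE, ENNReal.toReal_mul, ENNReal.toReal_mul,
      ENNReal.toReal_natCast] at h1
    exact h1
  have hD : 0 < piP μ n Sx := aux_den_pos hub hn x
  have hDlb : (μ (Ioi (x - K'))).toReal * (μ (Ioi K')).toReal ^ (n - 1) ≤ piP μ n Sx := by
    have h1 := ENNReal.toReal_mono (measure_ne_top _ _) (aux_den_lb (μ := μ) hn hK' x)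
    rwa [ENNReal.toReal_mul, ENNReal.toReal_pow] at h1
  have hμx : 0 < (μ (Ioi (x - K'))).toReal :=
    ENNReal.toReal_pos (hub _).ne' (measure_ne_top _ _)
  have hc : 0 < (μ (Ioi K')).toReal ^ (n - 1) :=
    pow_pos (ENNReal.toReal_pos (hub _).ne' (measure_ne_top _ _)) _
  show piP μ n _ / piP μ n Sx ≤ piP μ n _ / piP μ n Sx + _
  calc piP μ n ({v | ∃ i, x - K' < v i} ∩ Sx) / piP μ n Sx
      ≤ (piP μ n ({v | SecondLe K v} ∩ Sx) +
          ((n * n : ℕ) : ℝ) * ((μ (Ioi K)).toReal * (μ (Ioi (x - K'))).toReal)) / piP μ n Sx :=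
        div_le_div_of_nonneg_right hreal hD.le
    _ = piP μ n ({v | SecondLe K v} ∩ Sx) / piP μ n Sx +
          ((n * n : ℕ) : ℝ) * ((μ (Ioi K)).toReal * (μ (Ioi (x - K'))).toReal) / piP μ n Sx :=
        add_div _ _ _
    _ ≤ piP μ n ({v | SecondLe K v} ∩ Sx) / piP μ n Sx +
          ((n * n : ℕ) : ℝ) * (μ (Ioi K)).toReal / (μ (Ioi K')).toReal ^ (n - 1) := by
        refine add_le_add le_rfl ?_
        have h2 : ((n * n : ℕ) : ℝ) * ((μ (Ioi K)).toReal * (μ (Ioi (x - K'))).toReal) /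
            piP μ n Sx ≤
            ((n * n : ℕ) : ℝ) * ((μ (Ioi K)).toReal * (μ (Ioi (x - K'))).toReal) /
            ((μ (Ioi (x - K'))).toReal * (μ (Ioi K')).toReal ^ (n - 1)) :=
          div_le_div_of_nonneg_left (by positivity) (by positivity) hDlb
        refine h2.trans (le_of_eq ?_)
        rw [mul_comm ((μ (Ioi (x - K'))).toReal) ((μ (Ioi K')).toReal ^ (n - 1)),
          show ((n * n : ℕ) : ℝ) * ((μ (Ioi K)).toReal * (μ (Ioi (x - K'))).toReal) =
            ((n * n : ℕ) : ℝ) * (μ (Ioi K)).toReal * (μ (Ioi (x - K'))).toReal by ring]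
        exact mul_div_mul_right _ _ hμx.ne'

end Aux

section LiminfAux

variable {u w : ℝ → ℝ}

lemma aux_bdd_ge (h0 : ∀ x, 0 ≤ u x) : IsBoundedUnder (· ≥ ·) (atTop : Filter ℝ) u :=
  isBoundedUnder_of ⟨0, h0⟩

lemma aux_bdd_le (h1 : ∀ x, u x ≤ 1) : IsBoundedUnder (· ≤ ·) (atTop : Filter ℝ) u :=
  isBoundedUnder_of ⟨1, h1⟩

lemma aux_liminf_le_one (h0 : ∀ x, 0 ≤ u x) (h1 : ∀ x, u x ≤ 1) : liminf u atTop ≤ 1 :=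
  liminf_le_of_frequently_le (Frequently.of_forall h1) (aux_bdd_ge h0)

lemma aux_liminf_mono (h0 : ∀ x, 0 ≤ u x) (h1 : ∀ x, w x ≤ 1) (hle : ∀ x, u x ≤ w x) :
    liminf u atTop ≤ liminf w atTop :=
  liminf_le_liminf (Eventually.of_forall hle) (aux_bdd_ge h0)
    ((aux_bdd_le h1).isCoboundedUnder_ge)

lemma aux_liminf_add (h0u : ∀ x, 0 ≤ u x) (h1w : ∀ x, w x ≤ 1) {c : ℝ}
    (h : ∀ x, u x ≤ w x + c) : liminf u atTop ≤ liminf w atTop + c := by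
  refine le_of_forall_pos_le_add fun δ hδ => ?_
  have h2 : ∀ᶠ x in (atTop : Filter ℝ), liminf u atTop - δ < u x :=
    eventually_lt_of_lt_liminf (by linarith) (aux_bdd_ge h0u)
  have h3 : ∀ᶠ x in (atTop : Filter ℝ), liminf u atTop - δ - c ≤ w x :=
    h2.mono fun x hx => by have := h x; linarith
  have h4 : liminf u atTop - δ - c ≤ liminf w atTop :=
    le_liminf_of_le ((aux_bdd_le h1w).isCoboundedUnder_ge) h3
  linarith

lemma aux_tendsto_one (h1 : ∀ K, u K ≤ 1)
    (h2 : ∀ ε > (0 : ℝ), ∀ᶠ K in (atTop : Filter ℝ), 1 - ε < u K) :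
    Tendsto u atTop (nhds 1) := by
  rw [Metric.tendsto_nhds]
  intro ε hε
  filter_upwards [h2 ε hε] with K hK
  rw [Real.dist_eq, abs_lt]
  exact ⟨by linarith, by linarith [h1 K]⟩

lemma aux_tendsto_extract (H : Tendsto u atTop (nhds 1)) {ε : ℝ} (hε : 0 < ε) :
    ∀ᶠ K in (atTop : Filter ℝ), 1 - ε < u K := by
  filter_upwards [Metric.tendsto_nhds.mp H ε hε] with K hK
  rw [Real.dist_eq, abs_lt] at hK
  linarith [hK.1]

end LiminfAux

theorem stmt2 (μ : Measure ℝ) [IsProbabilityMeasure μ]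
    (hnn : μ (Set.Iio 0) = 0) (hub : ∀ x : ℝ, 0 < μ (Set.Ioi x))
    (n : ℕ) (hn : 2 ≤ n) :
    Tendsto (fun K : ℝ =>
        liminf (fun x : ℝ => condN μ n {v | SecondLe K v} x) atTop) atTop (nhds 1)
    ↔ Tendsto (fun K : ℝ =>
        liminf (fun x : ℝ => condN μ n {v | ∃ i, x - K < v i} x) atTop) atTop (nhds 1) := by
  constructor
  · intro H1
    refine aux_tendsto_one
      (fun K => aux_liminf_le_one (fun x => aux_condN_nonneg _ _) (fun x => aux_condN_le_one _ _))
      (fun ε hε => ?_)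
    obtain ⟨K₀, hK₀⟩ := (aux_tendsto_extract H1 hε).exists
    have hK₀' : 1 - ε < liminf (fun x : ℝ => condN μ n {v | SecondLe K₀ v} x) atTop := hK₀
    filter_upwards [eventually_ge_atTop (((n : ℝ) - 1) * K₀)] with K hK
    have step1 : liminf (fun x : ℝ => condN μ n {v | SecondLe K₀ v} x) atTop ≤
        liminf (fun x : ℝ => condN μ n {v | ∃ i, x - K < v i} x) atTop := by
      refine aux_liminf_mono (fun x => aux_condN_nonneg _ _) (fun x => aux_condN_le_one _ _)
        (fun x => ?_)
      refine aux_condN_mono x (fun v hv => ⟨?_, hv.2⟩)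
      obtain ⟨i, hi⟩ := aux_fwd_subset hn K₀ x hv
      exact ⟨i, by linarith⟩
    linarith
  · intro H2
    refine aux_tendsto_one
      (fun K => aux_liminf_le_one (fun x => aux_condN_nonneg _ _) (fun x => aux_condN_le_one _ _))
      (fun ε hε => ?_)
    obtain ⟨K', hK'1, hK'0⟩ :=
      ((aux_tendsto_extract H2 (half_pos hε)).and (eventually_ge_atTop (0 : ℝ))).exists
    have hK'1' : 1 - ε / 2 <
        liminf (fun x : ℝ => condN μ n {v | ∃ i, x - K' < v i} x) atTop := hK'1
    have htend : Tendsto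
        (fun K : ℝ => ((n * n : ℕ) : ℝ) * (μ (Ioi K)).toReal / (μ (Ioi K')).toReal ^ (n - 1))
        atTop (nhds 0) := by
      have h1 : Tendsto (fun K : ℝ => μ (Ioi K)) atTop (nhds 0) := by
        have h2 := tendsto_measure_iInter_atTop (μ := μ) (s := fun K : ℝ => Ioi K)
          (fun K => measurableSet_Ioi.nullMeasurableSet)
          (fun a b hab => Ioi_subset_Ioi hab) ⟨0, measure_ne_top _ _⟩
        have h3 : ⋂ K : ℝ, Ioi K = (∅ : Set ℝ) := by
          ext y
          simp only [mem_iInter, mem_Ioi, mem_empty_iff_false, iff_false, not_forall, not_lt]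
          exact ⟨y, le_rfl⟩
        rw [h3] at h2
        simpa [Function.comp_def] using h2
      have h2 : Tendsto (fun K : ℝ => (μ (Ioi K)).toReal) atTop (nhds 0) := by
        have := (ENNReal.tendsto_toReal (by simp : (0 : ℝ≥0∞) ≠ ⊤)).comp h1
        simpa [Function.comp_def] using this
      have h3 := (h2.const_mul ((n * n : ℕ) : ℝ)).div_const ((μ (Ioi K')).toReal ^ (n - 1))
      simpa using h3
    filter_upwards [htend.eventually_lt_const (half_pos hε)] with K hK
    have key : liminf (fun x : ℝ => condN μ n {v | ∃ i, x - K' < v i} x) atTop ≤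
        liminf (fun x : ℝ => condN μ n {v | SecondLe K v} x) atTop +
          ((n * n : ℕ) : ℝ) * (μ (Ioi K)).toReal / (μ (Ioi K')).toReal ^ (n - 1) :=
      aux_liminf_add (fun x => aux_condN_nonneg _ _) (fun x => aux_condN_le_one _ _)
        (fun x => aux_key_bwd hub hn K hK'0 x)
    linarith
end

section
/- Every distribution with dominatedly varying tail belongs to the class 𝓙: if limsup_{x→∞} F̄(x/2)/F̄(x) < ∞, then for i.i.d. X₁, X₂ ∼ F one has lim_{K→∞} liminf_{x→∞} P(max(X₁,X₂) > x−K | X₁+X₂ > x) = 1. -/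
open MeasureTheory Filter Set

/-- Tail of a distribution: `F̄(x) = μ(x, ∞)`. -/
noncomputable def tail (μ : Measure ℝ) (x : ℝ) : ℝ := (μ (Set.Ioi x)).toReal

/-- Conditional probability `P(A | X₁ + X₂ > x)` for two i.i.d. variables with law `μ`. -/
noncomputable def condPair (μ : Measure ℝ) (A : Set (ℝ × ℝ)) (x : ℝ) : ℝ :=
  ((μ.prod μ) (A ∩ {p | x < p.1 + p.2})).toReal / ((μ.prod μ) {p | x < p.1 + p.2}).toReal

/-- The class 𝓙 : `lim_{K→∞} liminf_{x→∞} P(max(X₁,X₂) > x − K | X₁ + X₂ > x) = 1`. -/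
def MemJ (μ : Measure ℝ) : Prop :=
  Tendsto (fun K : ℝ =>
      liminf (fun x : ℝ => condPair μ {p | x - K < max p.1 p.2} x) atTop)
    atTop (nhds 1)

/-- The class 𝓙 (equivalent form): for every nonnegative, unbounded, nondecreasing `g`,
`lim_{x→∞} P(min(X₁,X₂) > g(x) | X₁ + X₂ > x) = 0`. -/
def MemJg (μ : Measure ℝ) : Prop :=
  ∀ g : ℝ → ℝ, (∀ x, 0 ≤ g x) → Monotone g → (∀ M, ∃ x, M < g x) →
    Tendsto (fun x : ℝ => condPair μ {p | g x < min p.1 p.2} x) atTop (nhds 0)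

/-- Tail of the two-fold convolution: `F̄²*(x) = P(X₁ + X₂ > x)`. -/
noncomputable def tail2 (μ : Measure ℝ) (x : ℝ) : ℝ := ((μ.prod μ) {p | x < p.1 + p.2}).toReal

/-- Weak asymptotic tail-equivalence `F̄ ≍ Ḡ`:
`0 < liminf F̄(x)/Ḡ(x) ≤ limsup F̄(x)/Ḡ(x) < ∞`. -/
def WeakTailEquiv (μ ν : Measure ℝ) : Prop :=
  (∃ c : ℝ, 0 < c ∧ ∀ᶠ x in atTop, c * tail ν x ≤ tail μ x) ∧
  (∃ C : ℝ, ∀ᶠ x in atTop, tail μ x ≤ C * tail ν x)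

/-- Convolution of two laws on ℝ. -/
noncomputable def conv (μ ν : Measure ℝ) : Measure ℝ :=
  Measure.map (fun p : ℝ × ℝ => p.1 + p.2) (μ.prod ν)

/-- `n`-fold convolution `F^{n*}`. -/
noncomputable def nconv (μ : Measure ℝ) : ℕ → Measure ℝ
  | 0 => Measure.dirac 0
  | n + 1 => conv (nconv μ n) μ

lemma tail_tendsto (μ : Measure ℝ) [IsProbabilityMeasure μ] :
    Tendsto (tail μ) atTop (nhds 0) := by
  have h : Tendsto (μ ∘ Set.Ioi) atTop (nhds (μ (⋂ x : ℝ, Set.Ioi x))) :=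
    tendsto_measure_iInter_atTop (fun i => measurableSet_Ioi.nullMeasurableSet)
      (fun a b hab => Set.Ioi_subset_Ioi hab) ⟨0, measure_ne_top μ _⟩
  have h2 : (⋂ x : ℝ, Set.Ioi x) = ∅ := by
    ext y; simp only [Set.mem_iInter, Set.mem_Ioi, Set.mem_empty_iff_false, iff_false, not_forall,
      not_lt]
    exact ⟨y, le_refl y⟩
  rw [h2, measure_empty] at h
  have := (ENNReal.tendsto_toReal (by simp : (0:ENNReal) ≠ ⊤)).comp h
  simp only [Function.comp_def, ENNReal.toReal_zero] at this
  exact this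

lemma tail_nonneg (μ : Measure ℝ) (x : ℝ) : 0 ≤ tail μ x := ENNReal.toReal_nonneg

lemma condPair_nonneg (μ : Measure ℝ) (A : Set (ℝ × ℝ)) (x : ℝ) : 0 ≤ condPair μ A x :=
  div_nonneg ENNReal.toReal_nonneg ENNReal.toReal_nonneg

lemma condPair_le_one (μ : Measure ℝ) [IsProbabilityMeasure μ] (A : Set (ℝ × ℝ)) (x : ℝ) :
    condPair μ A x ≤ 1 := by
  apply div_le_one_of_le₀
  · exact ENNReal.toReal_mono (measure_ne_top _ _) (measure_mono Set.inter_subset_right)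
  · exact ENNReal.toReal_nonneg

theorem stmt8 (μ : Measure ℝ) [IsProbabilityMeasure μ]
    (hnn : μ (Set.Iio 0) = 0) (hub : ∀ x : ℝ, 0 < μ (Set.Ioi x))
    (hD : ∃ C : ℝ, ∀ᶠ x in atTop, tail μ (x / 2) ≤ C * tail μ x) :
    MemJ μ := by
  obtain ⟨C, hC⟩ := hD
  set C' : ℝ := max C 1 with hC'def
  have hC'pos : (0:ℝ) < C' := lt_of_lt_of_le one_pos (le_max_right _ _)
  have hC'ev : ∀ᶠ x in atTop, tail μ (x / 2) ≤ C' * tail μ x := by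
    filter_upwards [hC] with x hx
    exact hx.trans (mul_le_mul_of_nonneg_right (le_max_left _ _) (tail_nonneg μ x))
  have hIci : μ (Set.Ici 0) = 1 := by
    rw [← Set.compl_Iio, prob_compl_eq_one_sub measurableSet_Iio, hnn, tsub_zero]
  -- denominator bounds
  have hden_ge : ∀ x : ℝ, μ (Set.Ioi x) ≤ (μ.prod μ) {p : ℝ × ℝ | x < p.1 + p.2} := by
    intro x
    have hsub : Set.Ioi x ×ˢ Set.Ici 0 ⊆ {p : ℝ × ℝ | x < p.1 + p.2} := by
      rintro ⟨a, b⟩ ⟨ha, hb⟩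
      exact lt_of_lt_of_le ha (le_add_of_nonneg_right (show (0:ℝ) ≤ b from hb))
    calc μ (Set.Ioi x) = μ (Set.Ioi x) * μ (Set.Ici 0) := by rw [hIci, mul_one]
      _ = (μ.prod μ) (Set.Ioi x ×ˢ Set.Ici 0) := (Measure.prod_prod _ _).symm
      _ ≤ _ := measure_mono hsub
  have hden_pos : ∀ x : ℝ, 0 < ((μ.prod μ) {p : ℝ × ℝ | x < p.1 + p.2}).toReal := by
    intro x
    exact ENNReal.toReal_pos (fun h => (lt_irrefl 0 (h ▸ lt_of_lt_of_le (hub x) (hden_ge x))).elim)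
      (measure_ne_top _ _)
  have htx_le : ∀ x : ℝ, tail μ x ≤ ((μ.prod μ) {p : ℝ × ℝ | x < p.1 + p.2}).toReal :=
    fun x => ENNReal.toReal_mono (measure_ne_top _ _) (hden_ge x)
  -- key eventual lower bound
  have key : ∀ K : ℝ, ∀ᶠ x in atTop,
      1 - 2 * C' * tail μ K ≤ condPair μ {p | x - K < max p.1 p.2} x := by
    intro K
    filter_upwards [hC'ev] with x hhalf
    set S : Set (ℝ × ℝ) := {p : ℝ × ℝ | x < p.1 + p.2} with hS
    set A : Set (ℝ × ℝ) := {p : ℝ × ℝ | x - K < max p.1 p.2} with hA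
    set d : ℝ := ((μ.prod μ) S).toReal with hd
    set n : ℝ := ((μ.prod μ) (A ∩ S)).toReal with hn
    have hdpos : 0 < d := hden_pos x
    have hsub : S ⊆ (A ∩ S) ∪ ((Set.Ioi (x/2) ×ˢ Set.Ioi K) ∪ (Set.Ioi K ×ˢ Set.Ioi (x/2))) := by
      rintro ⟨a, b⟩ hp
      by_cases hpa : (a, b) ∈ A
      · exact Or.inl ⟨hpa, hp⟩
      · simp only [hA, Set.mem_setOf_eq, not_lt] at hpa
        have hab : x < a + b := hp
        have ha' : a ≤ x - K := le_trans (le_max_left a b) hpa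
        have hb' : b ≤ x - K := le_trans (le_max_right a b) hpa
        have haK : K < a := by linarith
        have hbK : K < b := by linarith
        rcases lt_or_ge (x/2) a with h | h
        · exact Or.inr (Or.inl ⟨h, hbK⟩)
        · exact Or.inr (Or.inr ⟨haK, show x/2 < b by linarith⟩)
    have hEN : (μ.prod μ) S ≤ (μ.prod μ) (A ∩ S)
        + (μ (Set.Ioi (x/2)) * μ (Set.Ioi K) + μ (Set.Ioi K) * μ (Set.Ioi (x/2))) := by
      calc (μ.prod μ) S ≤ (μ.prod μ) ((A ∩ S) ∪ ((Set.Ioi (x/2) ×ˢ Set.Ioi K) ∪ (Set.Ioi K ×ˢ Set.Ioi (x/2)))) := measure_mono hsub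
        _ ≤ (μ.prod μ) (A ∩ S) + (μ.prod μ) ((Set.Ioi (x/2) ×ˢ Set.Ioi K) ∪ (Set.Ioi K ×ˢ Set.Ioi (x/2))) := measure_union_le _ _
        _ ≤ (μ.prod μ) (A ∩ S) + ((μ.prod μ) (Set.Ioi (x/2) ×ˢ Set.Ioi K) + (μ.prod μ) (Set.Ioi K ×ˢ Set.Ioi (x/2))) := add_le_add le_rfl (measure_union_le _ _)
        _ = _ := by rw [Measure.prod_prod, Measure.prod_prod]
    have hdn : d ≤ n + (tail μ (x/2) * tail μ K + tail μ K * tail μ (x/2)) := by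
      have h1 := ENNReal.toReal_mono (by finiteness) hEN
      rw [ENNReal.toReal_add (by finiteness) (by finiteness),
        ENNReal.toReal_add (by finiteness) (by finiteness),
        ENNReal.toReal_mul, ENNReal.toReal_mul] at h1
      exact h1
    have htK : 0 ≤ tail μ K := tail_nonneg μ K
    have htx : 0 ≤ tail μ x := tail_nonneg μ x
    have htxd : tail μ x ≤ d := htx_le x
    show 1 - 2 * C' * tail μ K ≤ n / d
    rw [le_div_iff₀ hdpos]
    nlinarith [mul_nonneg (mul_nonneg hC'pos.le htK) (sub_nonneg.2 htxd),
      mul_nonneg htK (sub_nonneg.2 hhalf)]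
  -- squeeze on liminf
  have hbdd : ∀ K : ℝ, IsBoundedUnder (· ≥ ·) atTop
      (fun x : ℝ => condPair μ {p | x - K < max p.1 p.2} x) :=
    fun K => isBoundedUnder_of ⟨0, fun x => condPair_nonneg μ _ x⟩
  have hcobdd : ∀ K : ℝ, IsCoboundedUnder (· ≥ ·) atTop
      (fun x : ℝ => condPair μ {p | x - K < max p.1 p.2} x) := by
    intro K
    exact (isBoundedUnder_of ⟨1, fun x => condPair_le_one μ _ x⟩).isCoboundedUnder_ge
  have hlow : ∀ K : ℝ, 1 - 2 * C' * tail μ K ≤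
      liminf (fun x : ℝ => condPair μ {p | x - K < max p.1 p.2} x) atTop :=
    fun K => le_liminf_of_le (hcobdd K) (key K)
  have hhigh : ∀ K : ℝ, liminf (fun x : ℝ => condPair μ {p | x - K < max p.1 p.2} x) atTop ≤ 1 := by
    intro K
    refine liminf_le_of_le (hbdd K) ?_
    intro b hb
    obtain ⟨x, hx⟩ := hb.exists
    exact hx.trans (condPair_le_one μ _ x)
  have hlim : Tendsto (fun K : ℝ => 1 - 2 * C' * tail μ K) atTop (nhds 1) := by
    have := (tail_tendsto μ).const_mul (2 * C')
    have h2 := this.const_sub 1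
    simpa using h2
  exact tendsto_of_tendsto_of_tendsto_of_le_of_le hlim tendsto_const_nhds hlow hhigh
end
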